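/- There is a family of size continuum of Erdős–Ulam ideals, none of which is increasing-invariant, that forms an antichain in the order ⊑ (containment of isomorphic copy): for any two distinct ideals I, J in the family there is no bijection φ: ℕ → ℕ with A ∈ I ⟹ φ^{-1}[A] ∈ J. -/

import Mathlib

open Filter Finset Topology

/-- `cnt A n = |A ∩ [0,n)|`. -/
noncomputable def cnt (A : Set ℕ) (n : ℕ) : ℕ := (A ∩ Set.Iio n).ncard

/-- The simple density ideal associated to a weight `g`. -/
def Zg (g : ℕ → ℝ) : Set (Set ℕ) :=
  {A | Tendsto (fun n => (cnt A n : ℝ) / g n) atTop (𝓝 0)}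

/-- The ideal of asymptotic density zero sets. -/
def Zid : Set (Set ℕ) :=
  {A | Tendsto (fun n => (cnt A n : ℝ) / n) atTop (𝓝 0)}

/-- An ideal is increasing-invariant. -/
def IncInv (I : Set (Set ℕ)) : Prop :=
  ∀ B ∈ I, ∀ C : Set ℕ, (∀ n, cnt C n ≤ cnt B n) → C ∈ I

/-- Tallness. -/
def Tall (I : Set (Set ℕ)) : Prop :=
  ∀ A : Set ℕ, A.Infinite → ∃ B ⊆ A, B.Infinite ∧ B ∈ I

/-- The conditions on `f` for the Erdős–Ulam ideal `EU f` to be defined. -/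
def EUcond (f : ℕ → ℝ) : Prop :=
  (∀ n, 0 ≤ f n) ∧ Tendsto (fun n => ∑ i ∈ Finset.range n, f i) atTop atTop ∧
    Tendsto (fun n => f n / ∑ i ∈ Finset.range (n + 1), f i) atTop (𝓝 0)

/-- The Erdős–Ulam ideal associated to `f`. -/
def EU (f : ℕ → ℝ) : Set (Set ℕ) :=
  {A | Tendsto
    (fun n => (∑ i ∈ Finset.range n, Set.indicator A f i) / ∑ i ∈ Finset.range n, f i)
    atTop (𝓝 0)}

/-- Being an Erdős–Ulam ideal. -/
def IsEUIdeal (I : Set (Set ℕ)) : Prop := ∃ f : ℕ → ℝ, EUcond f ∧ I = EU f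
/-- `I ⊑ J`: `J` contains an isomorphic copy of `I`. -/
def SqLe (I J : Set (Set ℕ)) : Prop :=
  ∃ φ : ℕ → ℕ, Function.Bijective φ ∧ ∀ A ∈ I, φ ⁻¹' A ∈ J


namespace S16

/-- multiplier -/
def P (k : ℕ) : ℕ := 4*k + 40

/-- level base exponents -/
def c : ℕ → ℕ
  | 0 => 0
  | (k+1) => c k + P k * 2^k + 4*k + 40

/-- binary code of `x ∩ [0,k)` -/
noncomputable def t (x : Set ℕ) (k : ℕ) : ℕ :=
  ∑ i ∈ Finset.range k, Set.indicator x (fun i => 2^i) i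

noncomputable def a (x : Set ℕ) (k : ℕ) : ℕ := c k + P k * t x k

/-- level of block `b` -/
def lv (b : ℕ) : ℕ := (b+1)/2

/-- exponent of the length of block `b` -/
noncomputable def ex (x : Set ℕ) (b : ℕ) : ℕ :=
  if b % 2 = 0 then a x (b/2) else a x ((b+1)/2) + (b+1)/2

/-- length of block `b` -/
noncomputable def Lam (x : Set ℕ) (b : ℕ) : ℕ := 2^(ex x b)

lemma lv_def (b : ℕ) : lv b = (b+1)/2 := rfl

lemma c_mono : Monotone c := by
  apply monotone_nat_of_le_succ
  intro k; simp only [c]; omega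

lemma le_c (k : ℕ) : k ≤ c k := by
  induction k with
  | zero => simp [c]
  | succ n ih => simp only [c]; omega

lemma gap {L' L : ℕ} (h : L' < L) : c L' + P L' * 2^L' + 2*L + 10 ≤ c L := by
  induction L with
  | zero => omega
  | succ n ih =>
    rcases Nat.lt_succ_iff_lt_or_eq.mp h with h' | h'
    · have h2 := ih h'
      simp only [c]; omega
    · subst h'; simp only [c]; omega

lemma t_succ (x : Set ℕ) (n : ℕ) :
    t x (n+1) = t x n + Set.indicator x (fun i => 2^i) n := by
  rw [t, Finset.sum_range_succ, t]

lemma ind_le (x : Set ℕ) (n : ℕ) : Set.indicator x (fun i : ℕ => 2^i) n ≤ 2^n := by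
  classical
  by_cases h : n ∈ x
  · rw [Set.indicator_of_mem h]
  · rw [Set.indicator_of_notMem h]; positivity

lemma t_lt (x : Set ℕ) (k : ℕ) : t x k < 2^k := by
  induction k with
  | zero => simp [t]
  | succ n ih =>
    have h1 := t_succ x n
    have h2 := ind_le x n
    have : 2^(n+1) = 2^n + 2^n := by ring
    omega

lemma t_inj {x y : Set ℕ} {L : ℕ} (h : t x L = t y L) :
    ∀ i < L, (i ∈ x ↔ i ∈ y) := by
  induction L with
  | zero => intro i hi; omega
  | succ n ih =>
    have hx := t_lt x n
    have hy := t_lt y n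
    rw [t_succ, t_succ] at h
    have hxy : t x n = t y n ∧ ((n ∈ x) ↔ (n ∈ y)) := by
      by_cases hnx : n ∈ x <;> by_cases hny : n ∈ y
      · rw [Set.indicator_of_mem hnx, Set.indicator_of_mem hny] at h
        exact ⟨by omega, by tauto⟩
      · rw [Set.indicator_of_mem hnx, Set.indicator_of_notMem hny] at h
        exact absurd h (by omega)
      · rw [Set.indicator_of_notMem hnx, Set.indicator_of_mem hny] at h
        exact absurd h (by omega)
      · rw [Set.indicator_of_notMem hnx, Set.indicator_of_notMem hny] at h
        exact ⟨by omega, by tauto⟩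
    intro i hi
    rcases Nat.lt_succ_iff_lt_or_eq.mp hi with h' | h'
    · exact ih hxy.1 i h'
    · subst h'; exact hxy.2

lemma a_lb (x : Set ℕ) (k : ℕ) : c k ≤ a x k := Nat.le_add_right _ _

lemma a_ub (x : Set ℕ) (k : ℕ) : a x k + P k ≤ c k + P k * 2^k := by
  have h1 : t x k + 1 ≤ 2^k := t_lt x k
  have h2 : P k * (t x k + 1) ≤ P k * 2^k := Nat.mul_le_mul_left _ h1
  rw [a]; nlinarith

lemma ex_lb (x : Set ℕ) (b : ℕ) : c (lv b) ≤ ex x b := by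
  rw [ex, lv_def]
  split
  · next h =>
    have h2 : (b+1)/2 = b/2 := by omega
    rw [h2]; exact a_lb x _
  · exact le_trans (a_lb x _) (Nat.le_add_right _ _)

lemma ex_ub (x : Set ℕ) (b : ℕ) : ex x b ≤ c (lv b) + P (lv b) * 2^(lv b) := by
  rw [ex, lv_def]
  split
  · next h =>
    have h2 : (b+1)/2 = b/2 := by omega
    rw [h2]
    have := a_ub x (b/2)
    omega
  · have h1 := a_ub x ((b+1)/2)
    have hP : (b+1)/2 ≤ P ((b+1)/2) := by rw [P]; omega
    omega

lemma ex_inj (x : Set ℕ) : Function.Injective (ex x) := by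
  have key : ∀ b b' : ℕ, lv b < lv b' → ex x b < ex x b' := by
    intro b b' hl
    calc ex x b ≤ c (lv b) + P (lv b) * 2^(lv b) := ex_ub x b
    _ < c (lv b') := by have := gap hl; omega
    _ ≤ ex x b' := ex_lb x b'
  intro b1 b2 h
  have hlv : lv b1 = lv b2 := by
    rcases lt_trichotomy (lv b1) (lv b2) with h' | h' | h'
    · exact absurd h (ne_of_lt (key _ _ h'))
    · exact h'
    · exact absurd h.symm (ne_of_lt (key _ _ h'))
  rw [lv_def, lv_def] at hlv
  rw [ex, ex] at h
  rcases Nat.even_or_odd b1 with he1 | ho1 <;> rcases Nat.even_or_odd b2 with he2 | ho2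
  · have m1 : b1 % 2 = 0 := Nat.even_iff.mp he1
    have m2 : b2 % 2 = 0 := Nat.even_iff.mp he2
    omega
  · have m1 : b1 % 2 = 0 := Nat.even_iff.mp he1
    have m2 : b2 % 2 = 1 := Nat.odd_iff.mp ho2
    rw [if_pos m1, if_neg (by omega)] at h
    have hh : b1/2 = (b2+1)/2 := by omega
    rw [hh] at h
    have : 1 ≤ (b2+1)/2 := by omega
    omega
  · have m1 : b1 % 2 = 1 := Nat.odd_iff.mp ho1
    have m2 : b2 % 2 = 0 := Nat.even_iff.mp he2
    rw [if_neg (by omega), if_pos m2] at h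
    have hh : b2/2 = (b1+1)/2 := by omega
    rw [hh] at h
    have : 1 ≤ (b1+1)/2 := by omega
    omega
  · have m1 : b1 % 2 = 1 := Nat.odd_iff.mp ho1
    have m2 : b2 % 2 = 1 := Nat.odd_iff.mp ho2
    rw [if_neg (by omega), if_neg (by omega)] at h
    have hh : (b1+1)/2 = (b2+1)/2 := hlv
    rw [hh] at h
    omega

/-- Separation of exponents across two distinct codes. -/
lemma sep {x y : Set ℕ} {k₀ : ℕ} (ht : ∀ L, k₀ ≤ L → t x L ≠ t y L)
    {b J : ℕ} (hb : 2*k₀ ≤ b) (hJ : k₀ ≤ J + 1) :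
    ex x b + 7 ≤ ex y (2*J+1) ∨ ex y (2*J+1) + b + 2 ≤ ex x b := by
  have hyg : ex y (2*J+1) = a y (J+1) + (J+1) := by
    rw [ex, if_neg (by omega)]
    have harg : (2*J+1+1)/2 = J+1 := by omega
    rw [harg]
  have hbL : b ≤ 2 * lv b := by rw [lv_def]; omega
  have hk₀L : k₀ ≤ lv b := by rw [lv_def]; omega
  rcases lt_trichotomy (lv b) (J+1) with hc | hc | hc
  · left
    have h1 : ex x b ≤ c (lv b) + P (lv b) * 2^(lv b) := ex_ub x b
    have h2 := gap hc
    have h3 : c (J+1) ≤ a y (J+1) := a_lb y _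
    rw [hyg]; omega
  · have htne := ht (lv b) hk₀L
    rw [hc] at htne hbL
    have hex : ex x b = a x (J+1) ∨ ex x b = a x (J+1) + (J+1) := by
      rw [ex]
      split
      · next hpar =>
        left
        have h2 : b/2 = J+1 := by rw [lv_def] at hc; omega
        rw [h2]
      · next hpar =>
        right
        have h2 : (b+1)/2 = J+1 := by rw [lv_def] at hc; omega
        rw [h2]
    have hP : P (J+1) = 4*(J+1) + 40 := rfl
    rcases Nat.lt_or_ge (t x (J+1)) (t y (J+1)) with hty | hty
    · left
      have h4 : a x (J+1) + P (J+1) ≤ a y (J+1) := by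
        rw [a, a]
        have h5 : P (J+1) * (t x (J+1) + 1) ≤ P (J+1) * t y (J+1) :=
          Nat.mul_le_mul_left _ hty
        nlinarith
      rcases hex with he | he <;> rw [hyg, he] <;> omega
    · have hty' : t y (J+1) < t x (J+1) :=
        lt_of_le_of_ne hty (fun h' => htne h'.symm)
      right
      have h4 : a y (J+1) + P (J+1) ≤ a x (J+1) := by
        rw [a, a]
        have h5 : P (J+1) * (t y (J+1) + 1) ≤ P (J+1) * t x (J+1) :=
          Nat.mul_le_mul_left _ hty'
        nlinarith
      rcases hex with he | he <;> rw [hyg, he] <;> omega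
  · right
    have h1 : c (lv b) ≤ ex x b := ex_lb x b
    have h2 := gap hc
    have h3 := a_ub y (J+1)
    have h4 : J + 1 ≤ P (J+1) := by rw [P]; omega
    rw [hyg]; omega



section Blocks

variable (L : ℕ → ℕ)

/-- start of block `b` -/
def st (b : ℕ) : ℕ := ∑ i ∈ Finset.range b, L i

lemma st_zero : st L 0 = 0 := rfl

lemma st_succ (b : ℕ) : st L (b+1) = st L b + L b := Finset.sum_range_succ _ _

lemma st_mono : Monotone (st L) := by
  apply monotone_nat_of_le_succ
  intro b; rw [st_succ]; omega

/-- block index of a position -/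
def blk (n : ℕ) : ℕ := Nat.findGreatest (fun b => st L b ≤ n) n

/-- the weight function -/
noncomputable def fE (n : ℕ) : ℝ := (L 0 : ℝ) * 2^(blk L n) / (L (blk L n))

/-- number of elements of `A` in block `b` -/
noncomputable def CAB (A : Set ℕ) (b : ℕ) : ℕ :=
  (A ∩ Set.Ico (st L b) (st L b + L b)).ncard

variable (hL : ∀ b, 1 ≤ L b)
include hL

lemma st_strictMono : StrictMono (st L) := by
  apply strictMono_nat_of_lt_succ
  intro b; rw [st_succ]; have := hL b; omega

lemma le_st (b : ℕ) : b ≤ st L b := by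
  induction b with
  | zero => omega
  | succ n ih => rw [st_succ]; have := hL n; omega

lemma blk_le (n : ℕ) : st L (blk L n) ≤ n :=
  Nat.findGreatest_spec (P := fun b => st L b ≤ n) (Nat.zero_le n) (by simp [st_zero])

lemma blk_lt (n : ℕ) : n < st L (blk L n + 1) := by
  by_cases h : blk L n + 1 ≤ n
  · have := Nat.findGreatest_is_greatest (lt_add_one (blk L n)) h
    simp only [not_le] at this
    exact this
  · have h2 := le_st L hL (blk L n + 1)
    omega

lemma blk_eq {b n : ℕ} (h1 : st L b ≤ n) (h2 : n < st L (b+1)) : blk L n = b := by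
  rcases lt_trichotomy (blk L n) b with h | h | h
  · have : st L (blk L n + 1) ≤ st L b := st_mono L (by omega)
    have := blk_lt L hL n
    omega
  · exact h
  · have : st L (b+1) ≤ st L (blk L n) := st_mono L (by omega)
    have := blk_le L hL n
    omega

lemma blk_ge {b n : ℕ} (h : st L b ≤ n) : b ≤ blk L n :=
  Nat.le_findGreatest (le_trans (le_st L hL b) h) h

lemma blk_tendsto : Tendsto (blk L) atTop atTop := by
  apply tendsto_atTop_atTop.2
  intro b
  exact ⟨st L b, fun n hn => blk_ge L hL hn⟩

lemma fE_nonneg (n : ℕ) : 0 ≤ fE L n := by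
  apply div_nonneg _ (by positivity)
  positivity

omit hL in
lemma fE_const {b i : ℕ} (hL : ∀ b, 1 ≤ L b) (h1 : st L b ≤ i) (h2 : i < st L (b+1)) :
    fE L i = (L 0 : ℝ) * 2^b / (L b) := by
  rw [fE, blk_eq L hL h1 h2]

omit hL in
lemma sum_blocks (g : ℕ → ℝ) (B : ℕ) :
    ∑ i ∈ Finset.range (st L B), g i
      = ∑ b ∈ Finset.range B, ∑ i ∈ Finset.Ico (st L b) (st L (b+1)), g i := by
  induction B with
  | zero => simp [st_zero]
  | succ n ih =>
    rw [Finset.sum_range_succ, ← ih, Finset.range_eq_Ico, Finset.range_eq_Ico]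
    exact (Finset.sum_Ico_consecutive g (Nat.zero_le _) (st_mono L (Nat.le_succ n))).symm

lemma sum_fE_block (b : ℕ) :
    ∑ i ∈ Finset.Ico (st L b) (st L (b+1)), fE L i = (L 0 : ℝ) * 2^b := by
  have : ∀ i ∈ Finset.Ico (st L b) (st L (b+1)), fE L i = (L 0 : ℝ) * 2^b / (L b) := by
    intro i hi
    rw [Finset.mem_Ico] at hi
    exact fE_const L hL hi.1 hi.2
  rw [Finset.sum_congr rfl this, Finset.sum_const, Nat.card_Ico, st_succ]
  have hLb : (0:ℝ) < (L b : ℝ) := by exact_mod_cast hL b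
  simp only [Nat.add_sub_cancel_left, nsmul_eq_mul]
  field_simp

lemma sum_fE_st (B : ℕ) :
    ∑ i ∈ Finset.range (st L B), fE L i = (L 0 : ℝ) * (2^B - 1) := by
  rw [sum_blocks]
  induction B with
  | zero => simp
  | succ n ih =>
    rw [Finset.sum_range_succ, ih, sum_fE_block L hL]
    ring

lemma sum_fE_mono : Monotone (fun n => ∑ i ∈ Finset.range n, fE L i) := by
  intro m n h
  apply Finset.sum_le_sum_of_subset_of_nonneg (Finset.range_subset_range.2 h)
  intro i _ _
  exact fE_nonneg L hL i

lemma sum_fE_lb {b n : ℕ} (h : st L b ≤ n) :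
    (L 0 : ℝ) * (2^b - 1) ≤ ∑ i ∈ Finset.range n, fE L i := by
  rw [← sum_fE_st L hL]
  exact sum_fE_mono L hL h

/-- the indicator sum over block `b`. -/
lemma sum_ind_block (A : Set ℕ) (b : ℕ) :
    ∑ i ∈ Finset.Ico (st L b) (st L (b+1)), A.indicator (fE L) i
      = (CAB L A b : ℝ) * ((L 0 : ℝ) * 2^b / (L b)) := by
  classical
  have h1 : ∑ i ∈ Finset.Ico (st L b) (st L (b+1)), A.indicator (fE L) i
      = ∑ i ∈ (Finset.Ico (st L b) (st L (b+1))).filter (· ∈ A), fE L i := by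
    rw [Finset.sum_filter]
    apply Finset.sum_congr rfl
    intro i _
    rw [Set.indicator_apply]
  rw [h1]
  have h2 : ∀ i ∈ (Finset.Ico (st L b) (st L (b+1))).filter (· ∈ A),
      fE L i = (L 0 : ℝ) * 2^b / (L b) := by
    intro i hi
    rw [Finset.mem_filter, Finset.mem_Ico] at hi
    exact fE_const L hL hi.1.1 hi.1.2
  rw [Finset.sum_congr rfl h2, Finset.sum_const]
  have h3 : CAB L A b = ((Finset.Ico (st L b) (st L (b+1))).filter (· ∈ A)).card := by
    rw [CAB, ← Set.ncard_coe_finset]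
    congr 1
    ext i
    simp only [Finset.coe_filter, Finset.mem_Ico, Set.mem_inter_iff, Set.mem_Ico,
      Set.mem_setOf_eq, st_succ]
    try tauto
  rw [h3, nsmul_eq_mul]

lemma CAB_le (A : Set ℕ) (b : ℕ) : CAB L A b ≤ L b := by
  have h1 : (A ∩ Set.Ico (st L b) (st L b + L b)).ncard ≤ (Set.Ico (st L b) (st L b + L b)).ncard := by
    apply Set.ncard_le_ncard Set.inter_subset_right
  rw [CAB]
  have h2 : (Set.Ico (st L b) (st L b + L b)).ncard = L b := by
    rw [← Finset.coe_Ico, Set.ncard_coe_finset, Nat.card_Ico]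
    omega
  omega

/-- A ∈ EU implies block densities tend to 0. -/
lemma EU_to_block {A : Set ℕ} (hA : A ∈ EU (fE L)) :
    Tendsto (fun b => (CAB L A b : ℝ) / L b) atTop (𝓝 0) := by
  have hcomp : Tendsto (fun b => st L (b+1)) atTop atTop :=
    ((st_strictMono L hL).comp (strictMono_id.add_const 1)).tendsto_atTop
  have hR : Tendsto (fun b =>
      (∑ i ∈ Finset.range (st L (b+1)), Set.indicator A (fE L) i) /
        ∑ i ∈ Finset.range (st L (b+1)), fE L i) atTop (𝓝 0) := hA.comp hcomp
  apply squeeze_zero (fun b => by positivity)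
    (g := fun b => 2 * ((∑ i ∈ Finset.range (st L (b+1)), Set.indicator A (fE L) i) /
        ∑ i ∈ Finset.range (st L (b+1)), fE L i))
  · intro b
    have hden : ∑ i ∈ Finset.range (st L (b+1)), fE L i = (L 0 : ℝ) * (2^(b+1) - 1) :=
      sum_fE_st L hL (b+1)
    have hnum : (CAB L A b : ℝ) * ((L 0 : ℝ) * 2^b / (L b))
        ≤ ∑ i ∈ Finset.range (st L (b+1)), Set.indicator A (fE L) i := by
      rw [sum_blocks]
      rw [← sum_ind_block L hL A b]
      apply Finset.single_le_sum (f := fun j => ∑ i ∈ Finset.Ico (st L j) (st L (j+1)), A.indicator (fE L) i)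
      · intro j _
        apply Finset.sum_nonneg
        intro i _
        exact Set.indicator_nonneg (fun k _ => fE_nonneg L hL k) i
      · exact Finset.self_mem_range_succ b
    have hL0 : (0:ℝ) < (L 0 : ℝ) := by exact_mod_cast hL 0
    have hLb : (0:ℝ) < (L b : ℝ) := by exact_mod_cast hL b
    have hdenpos : (0:ℝ) < (L 0 : ℝ) * (2^(b+1) - 1) := by
      apply mul_pos hL0
      have : (2:ℝ)^(b+1) ≥ 2^1 := by
        apply pow_le_pow_right₀ (by norm_num) (by omega)
      simp at this ⊢
      linarith
    rw [hden]
    set N := ∑ i ∈ Finset.range (st L (b+1)), Set.indicator A (fE L) i with hN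
    have hN0 : 0 ≤ N :=
      Finset.sum_nonneg (fun i _ => Set.indicator_nonneg (fun k _ => fE_nonneg L hL k) i)
    have h2b : (0:ℝ) < (L 0 : ℝ) * 2^b := by positivity
    have step1 : (CAB L A b : ℝ) / L b ≤ N / ((L 0 : ℝ) * 2^b) := by
      have e1 : (CAB L A b : ℝ) / L b
          = ((CAB L A b : ℝ) * ((L 0 : ℝ) * 2^b / L b)) / ((L 0 : ℝ) * 2^b) := by
        field_simp
      rw [e1]
      exact (div_le_div_iff_of_pos_right h2b).2 hnum
    have step2 : N / ((L 0 : ℝ) * 2^b) = 2 * (N / ((L 0 : ℝ) * 2^(b+1))) := by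
      have : (2:ℝ)^(b+1) = 2 * 2^b := by ring
      rw [this]
      field_simp
    have step3 : N / ((L 0 : ℝ) * 2^(b+1)) ≤ N / ((L 0 : ℝ) * (2^(b+1) - 1)) := by
      apply div_le_div_of_nonneg_left hN0 hdenpos
      apply mul_le_mul_of_nonneg_left _ (le_of_lt hL0)
      linarith
    linarith
  · simpa using hR.const_mul 2

omit hL in
lemma geo_tendsto (θ : ℕ → ℝ) (hθ0 : ∀ b, 0 ≤ θ b) (hθ1 : ∀ b, θ b ≤ 1)
    (hθt : Tendsto θ atTop (𝓝 0)) :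
    Tendsto (fun b => (∑ j ∈ Finset.range (b+1), θ j * 2^j) * (2 / 2^b)) atTop (𝓝 0) := by
  rw [Metric.tendsto_atTop]
  intro ε hε
  obtain ⟨B, hB⟩ := Metric.tendsto_atTop.1 hθt (ε/8) (by linarith)
  have hsmall : ∀ j, B ≤ j → θ j ≤ ε/8 := by
    intro j hj
    have := hB j hj
    rw [Real.dist_eq, sub_zero] at this
    have h2 := abs_nonneg (θ j)
    have h3 := le_abs_self (θ j)
    linarith
  have h2 : Tendsto (fun b : ℕ => ((2:ℝ)^(B+1) * 2) * (1/2)^b) atTop (𝓝 0) := by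
    have := tendsto_pow_atTop_nhds_zero_of_lt_one
      (show (0:ℝ) ≤ 1/2 by norm_num) (show (1:ℝ)/2 < 1 by norm_num)
    simpa using this.const_mul ((2:ℝ)^(B+1) * 2)
  obtain ⟨N1, hN1⟩ := Metric.tendsto_atTop.1 h2 (ε/2) (by linarith)
  refine ⟨max B N1, fun b hb => ?_⟩
  have hbB : B ≤ b := le_trans (le_max_left _ _) hb
  have hbN1 : N1 ≤ b := le_trans (le_max_right _ _) hb
  have hpow : (0:ℝ) < 2^b := by positivity
  have hsplit : ∑ j ∈ Finset.range (b+1), θ j * 2^j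
      = (∑ j ∈ Finset.range B, θ j * 2^j) + ∑ j ∈ Finset.Ico B (b+1), θ j * 2^j := by
    rw [Finset.range_eq_Ico, Finset.range_eq_Ico]
    exact (Finset.sum_Ico_consecutive (fun j => θ j * 2^j) (Nat.zero_le B) (show B ≤ b+1 by omega)).symm
  have hsum1 : ∑ j ∈ Finset.range B, θ j * 2^j ≤ 2^B := by
    calc ∑ j ∈ Finset.range B, θ j * 2^j ≤ ∑ j ∈ Finset.range B, (2:ℝ)^j := by
          apply Finset.sum_le_sum
          intro j _
          nlinarith [hθ1 j, hθ0 j, pow_pos (show (0:ℝ) < 2 by norm_num) j]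
    _ = (2^B - 1)/(2 - 1) := geom_sum_eq (by norm_num) B
    _ ≤ 2^B := by norm_num
  have hsum2 : ∑ j ∈ Finset.Ico B (b+1), θ j * 2^j ≤ (ε/8) * 2^(b+1) := by
    calc ∑ j ∈ Finset.Ico B (b+1), θ j * 2^j ≤ ∑ j ∈ Finset.Ico B (b+1), (ε/8) * (2:ℝ)^j := by
          apply Finset.sum_le_sum
          intro j hj
          rw [Finset.mem_Ico] at hj
          have := hsmall j hj.1
          nlinarith [pow_pos (show (0:ℝ) < 2 by norm_num) j]
    _ = (ε/8) * ∑ j ∈ Finset.Ico B (b+1), (2:ℝ)^j := by rw [Finset.mul_sum]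
    _ ≤ (ε/8) * ∑ j ∈ Finset.range (b+1), (2:ℝ)^j := by
          apply mul_le_mul_of_nonneg_left _ (by linarith)
          apply Finset.sum_le_sum_of_subset_of_nonneg
          · rw [Finset.range_eq_Ico]
            exact Finset.Ico_subset_Ico (Nat.zero_le _) le_rfl
          · intro i _ _; positivity
    _ ≤ (ε/8) * 2^(b+1) := by
          rw [geom_sum_eq (by norm_num) (b+1)]
          have : (0:ℝ) < 2^(b+1) := by positivity
          nlinarith
  have hGnonneg : (0:ℝ) ≤ (∑ j ∈ Finset.range (b+1), θ j * 2^j) * (2 / 2^b) := by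
    apply mul_nonneg _ (by positivity)
    apply Finset.sum_nonneg
    intro j _
    have := hθ0 j
    positivity
  rw [Real.dist_eq, sub_zero, abs_of_nonneg hGnonneg]
  have hN1b := hN1 b hbN1
  rw [Real.dist_eq, sub_zero] at hN1b
  have he1 : ((2:ℝ)^(B+1) * 2) * (1/2)^b = 2^(B+1) * (2/2^b) := by
    rw [div_pow, one_pow]
    ring
  have habs : |((2:ℝ)^(B+1) * 2) * (1/2)^b| = ((2:ℝ)^(B+1) * 2) * (1/2)^b := by
    apply abs_of_nonneg; positivity
  rw [habs, he1] at hN1b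
  have h2b1 : (2:ℝ)^(b+1) = 2 * 2^b := by ring
  have hBb : (2:ℝ)^(B+1) = 2 * 2^B := by ring
  calc (∑ j ∈ Finset.range (b+1), θ j * 2^j) * (2 / 2^b)
      ≤ (2^B + (ε/8) * 2^(b+1)) * (2/2^b) := by
        apply mul_le_mul_of_nonneg_right _ (by positivity)
        rw [hsplit]; linarith
    _ ≤ 2^(B+1) * (2/2^b) + ε/2 := by
        have hX : (2:ℝ)^b * (2/2^b) = 2 := by field_simp
        have hBle : (2:ℝ)^B ≤ 2^(B+1) := by
          nlinarith [pow_pos (show (0:ℝ) < 2 by norm_num) B]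
        have hXpos : (0:ℝ) ≤ 2/2^b := by positivity
        calc ((2:ℝ)^B + (ε/8) * 2^(b+1)) * (2/2^b)
            = 2^B * (2/2^b) + (ε/8)*2*((2:ℝ)^b * (2/2^b)) := by rw [h2b1]; ring
          _ = 2^B * (2/2^b) + ε/2 := by rw [hX]; ring
          _ ≤ 2^(B+1) * (2/2^b) + ε/2 := by nlinarith
    _ < ε := by linarith

lemma mem_EU_of_bound {A : Set ℕ} (θ : ℕ → ℝ)
    (hθb : ∀ b, (CAB L A b : ℝ) ≤ θ b * L b) (hθ0 : ∀ b, 0 ≤ θ b) (hθ1 : ∀ b, θ b ≤ 1)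
    (hθt : Tendsto θ atTop (𝓝 0)) : A ∈ EU (fE L) := by
  have hG := geo_tendsto θ hθ0 hθ1 hθt
  have hcomp : Tendsto
      (fun n => (∑ j ∈ Finset.range (blk L n + 1), θ j * 2^j) * (2/2^(blk L n)))
      atTop (𝓝 0) := hG.comp (blk_tendsto L hL)
  rw [EU, Set.mem_setOf_eq]
  apply tendsto_of_tendsto_of_tendsto_of_le_of_le' tendsto_const_nhds hcomp
  · filter_upwards with n
    apply div_nonneg
    · apply Finset.sum_nonneg
      intro i _
      exact Set.indicator_nonneg (fun k _ => fE_nonneg L hL k) i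
    · apply Finset.sum_nonneg
      intro i _
      exact fE_nonneg L hL i
  · filter_upwards [eventually_ge_atTop (st L 1)] with n hn
    set b := blk L n with hb
    have hb1 : 1 ≤ b := blk_ge L hL hn
    have hL0 : (0:ℝ) < (L 0 : ℝ) := by exact_mod_cast hL 0
    have hnum1 : ∑ i ∈ Finset.range n, Set.indicator A (fE L) i
        ≤ ∑ i ∈ Finset.range (st L (b+1)), Set.indicator A (fE L) i := by
      apply Finset.sum_le_sum_of_subset_of_nonneg
        (Finset.range_subset_range.2 (le_of_lt (blk_lt L hL n)))
      intro i _ _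
      exact Set.indicator_nonneg (fun k _ => fE_nonneg L hL k) i
    have hnum2 : ∑ i ∈ Finset.range (st L (b+1)), Set.indicator A (fE L) i
        ≤ (L 0 : ℝ) * ∑ j ∈ Finset.range (b+1), θ j * 2^j := by
      rw [sum_blocks, Finset.mul_sum]
      apply Finset.sum_le_sum
      intro j _
      rw [sum_ind_block L hL A j]
      have hLj : (0:ℝ) < (L j : ℝ) := by exact_mod_cast hL j
      have := hθb j
      calc (CAB L A j : ℝ) * ((L 0 : ℝ) * 2^j / L j)
          ≤ (θ j * L j) * ((L 0 : ℝ) * 2^j / L j) := by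
            apply mul_le_mul_of_nonneg_right this
            positivity
        _ = (L 0 : ℝ) * (θ j * 2^j) := by field_simp
    have hden : (L 0 : ℝ) * (2^b/2) ≤ ∑ i ∈ Finset.range n, fE L i := by
      have h1 := sum_fE_lb L hL (blk_le L hL n)
      have h2 : (2:ℝ)^b/2 ≤ 2^b - 1 := by
        have : (2:ℝ)^1 ≤ 2^b := pow_le_pow_right₀ (by norm_num) hb1
        simp at this
        linarith
      nlinarith
    have hdenpos : (0:ℝ) < (L 0 : ℝ) * (2^b/2) := by positivity
    have hSnonneg : (0:ℝ) ≤ ∑ j ∈ Finset.range (b+1), θ j * 2^j := by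
      apply Finset.sum_nonneg
      intro j _
      have := hθ0 j
      positivity
    calc (∑ i ∈ Finset.range n, Set.indicator A (fE L) i) / ∑ i ∈ Finset.range n, fE L i
        ≤ ((L 0 : ℝ) * ∑ j ∈ Finset.range (b+1), θ j * 2^j) / ((L 0 : ℝ) * (2^b/2)) := by
          apply div_le_div₀ (by positivity) (le_trans hnum1 hnum2) hdenpos hden
      _ = (∑ j ∈ Finset.range (b+1), θ j * 2^j) * (2/2^b) := by
          field_simp

lemma eucond_fE (hL2 : ∀ b, 2^b ≤ L b) : EUcond (fE L) := by
  refine ⟨fE_nonneg L hL, ?_, ?_⟩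
  · apply tendsto_atTop_mono (f := fun n => (2:ℝ)^(blk L n) - 1)
    · intro n
      have h1 : (L 0 : ℝ) * (2^(blk L n) - 1) ≤ ∑ i ∈ Finset.range n, fE L i :=
        sum_fE_lb L hL (blk_le L hL n)
      have hL0 : (1:ℝ) ≤ (L 0 : ℝ) := by exact_mod_cast hL 0
      have h2 : (1:ℝ) ≤ 2^(blk L n) := one_le_pow₀ (by norm_num)
      nlinarith
    · have h3 : Tendsto (fun b : ℕ => (2:ℝ)^b - 1) atTop atTop :=
        tendsto_atTop_add_const_right _ (-1) (tendsto_pow_atTop_atTop_of_one_lt one_lt_two)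
      exact h3.comp (blk_tendsto L hL)
  · have hupper : Tendsto (fun n => ((2:ℝ)^(blk L n) - 1)⁻¹) atTop (𝓝 0) := by
      have h3 : Tendsto (fun b : ℕ => (2:ℝ)^b - 1) atTop atTop :=
        tendsto_atTop_add_const_right _ (-1) (tendsto_pow_atTop_atTop_of_one_lt one_lt_two)
      exact (h3.comp (blk_tendsto L hL)).inv_tendsto_atTop
    apply tendsto_of_tendsto_of_tendsto_of_le_of_le' tendsto_const_nhds hupper
    · filter_upwards with n
      apply div_nonneg (fE_nonneg L hL n)
      apply Finset.sum_nonneg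
      intro i _
      exact fE_nonneg L hL i
    · filter_upwards [eventually_ge_atTop (st L 1)] with n hn
      set b := blk L n with hb
      have hb1 : 1 ≤ b := blk_ge L hL hn
      have hL0 : (0:ℝ) < (L 0 : ℝ) := by exact_mod_cast hL 0
      have hLb : (0:ℝ) < (L b : ℝ) := by exact_mod_cast hL b
      have h2b : (2:ℝ) ≤ 2^b := by
        have : (2:ℝ)^1 ≤ 2^b := pow_le_pow_right₀ (by norm_num) hb1
        simpa using this
      have hfn : fE L n ≤ (L 0 : ℝ) := by
        rw [fE, ← hb]
        rw [div_le_iff₀ hLb]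
        have h4 : ((2:ℕ)^b : ℝ) ≤ (L b : ℝ) := by exact_mod_cast hL2 b
        push_cast at h4
        nlinarith
      have hden : (L 0 : ℝ) * (2^b - 1) ≤ ∑ i ∈ Finset.range (n+1), fE L i := by
        apply sum_fE_lb L hL
        have h5 := blk_le L hL n
        rw [← hb] at h5
        omega
      have hdenpos : (0:ℝ) < (L 0 : ℝ) * (2^b - 1) := by
        apply mul_pos hL0
        linarith
      calc fE L n / ∑ i ∈ Finset.range (n+1), fE L i
          ≤ (L 0 : ℝ) / ((L 0 : ℝ) * (2^b - 1)) := div_le_div₀ (le_of_lt hL0) hfn hdenpos hden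
        _ = ((2:ℝ)^b - 1)⁻¹ := by
            have hne : (2:ℝ)^b - 1 ≠ 0 := by linarith
            have hne0 : (L 0:ℝ) ≠ 0 := ne_of_gt hL0
            rw [inv_eq_one_div, div_eq_div_iff (ne_of_gt hdenpos) hne]
            ring

end Blocks


section Spec

variable (x : Set ℕ)

lemma c_ge40 (k : ℕ) : 40 * k ≤ c k := by
  induction k with
  | zero => simp
  | succ n ih => simp only [c]; omega

lemma ex_even (k : ℕ) : ex x (2*k) = a x k := by
  rw [ex, if_pos (by omega)]
  congr 1
  omega

lemma ex_odd (k : ℕ) : ex x (2*k+1) = a x (k+1) + (k+1) := by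
  rw [ex, if_neg (by omega)]
  have h : (2*k+1+1)/2 = k+1 := by omega
  rw [h]

lemma ex_ge (b : ℕ) : b ≤ ex x b := by
  rcases Nat.even_or_odd b with ⟨k, hk⟩ | ⟨k, hk⟩
  · subst hk
    have h1 : c k ≤ ex x (k+k) := by
      have := ex_lb x (k+k)
      have hlv : lv (k+k) = k := by rw [lv_def]; omega
      rw [hlv] at this
      exact this
    have := c_ge40 k
    omega
  · subst hk
    have h1 : ex x (2*k+1) = a x (k+1) + (k+1) := ex_odd x k
    have h2 : c (k+1) ≤ a x (k+1) := a_lb x (k+1)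
    have := c_ge40 (k+1)
    omega

lemma Lam_one (b : ℕ) : 1 ≤ Lam x b := Nat.one_le_two_pow

lemma Lam_ge (b : ℕ) : 2^b ≤ Lam x b :=
  Nat.pow_le_pow_right (by norm_num) (ex_ge x b)

lemma eucond_x : EUcond (fE (Lam x)) := eucond_fE (Lam x) (Lam_one x) (Lam_ge x)

end Spec


section IncInvFail

variable (x : Set ℕ)

/-- witness set in the ideal -/
def Bst : Set ℕ :=
  ⋃ k, Set.Ico (st (Lam x) (2*k+1)) (st (Lam x) (2*k+1) + Lam x (2*k+2))

/-- witness set not in the ideal -/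
def Cst : Set ℕ :=
  ⋃ k, Set.Ico (st (Lam x) (2*k+2)) (st (Lam x) (2*k+2) + Lam x (2*k+2))

lemma ex_even' (k : ℕ) : ex x (2*k+2) = a x (k+1) := by
  have h : 2*k+2 = 2*(k+1) := by omega
  rw [h, ex_even]

lemma Lam_chunk_le (k : ℕ) : Lam x (2*k+2) ≤ Lam x (2*k+1) := by
  rw [Lam, Lam, ex_even' , ex_odd]
  exact Nat.pow_le_pow_right (by norm_num) (by omega)

lemma ncard_Ico (u d : ℕ) : (Set.Ico u (u + d)).ncard = d := by
  rw [← Finset.coe_Ico, Set.ncard_coe_finset, Nat.card_Ico]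
  omega

lemma CAB_Bst_odd (k : ℕ) : CAB (Lam x) (Bst x) (2*k+1) = Lam x (2*k+2) := by
  have hL1 := Lam_one x
  have heq : Bst x ∩ Set.Ico (st (Lam x) (2*k+1)) (st (Lam x) (2*k+1) + Lam x (2*k+1))
      = Set.Ico (st (Lam x) (2*k+1)) (st (Lam x) (2*k+1) + Lam x (2*k+2)) := by
    ext n
    constructor
    · rintro ⟨hB, hblk⟩
      rw [Bst, Set.mem_iUnion] at hB
      obtain ⟨j, hj⟩ := hB
      rw [Set.mem_Ico] at hj hblk ⊢
      rcases lt_trichotomy j k with hjk | hjk | hjk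
      · exfalso
        have h1 : st (Lam x) (2*j+1) + Lam x (2*j+2) ≤ st (Lam x) (2*k+1) := by
          have h2 : st (Lam x) (2*j+2) ≤ st (Lam x) (2*k+1) := st_mono _ (by omega)
          have h3 : st (Lam x) (2*j+2) = st (Lam x) (2*j+1) + Lam x (2*j+1) := st_succ _ _
          have := Lam_chunk_le x j
          omega
        omega
      · subst hjk; exact ⟨hj.1, hj.2⟩
      · exfalso
        have h1 : st (Lam x) (2*k+1) + Lam x (2*k+1) ≤ st (Lam x) (2*j+1) := by
          have h3 : st (Lam x) (2*k+2) = st (Lam x) (2*k+1) + Lam x (2*k+1) := st_succ _ _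
          have h2 : st (Lam x) (2*k+2) ≤ st (Lam x) (2*j+1) := st_mono _ (by omega)
          omega
        omega
    · intro hn
      rw [Set.mem_Ico] at hn
      constructor
      · rw [Bst, Set.mem_iUnion]
        exact ⟨k, by rw [Set.mem_Ico]; exact hn⟩
      · rw [Set.mem_Ico]
        have := Lam_chunk_le x k
        omega
  rw [CAB, heq, ncard_Ico]

lemma CAB_Bst_even (k : ℕ) : CAB (Lam x) (Bst x) (2*k) = 0 := by
  rw [CAB, Set.ncard_eq_zero]
  ext n
  simp only [Set.mem_inter_iff, Set.mem_empty_iff_false, iff_false]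
  rintro ⟨hB, hblk⟩
  rw [Bst, Set.mem_iUnion] at hB
  obtain ⟨j, hj⟩ := hB
  rw [Set.mem_Ico] at hj hblk
  rcases Nat.lt_or_ge j k with hjk | hjk
  · have h2 : st (Lam x) (2*j+2) ≤ st (Lam x) (2*k) := st_mono _ (by omega)
    have h3 : st (Lam x) (2*j+2) = st (Lam x) (2*j+1) + Lam x (2*j+1) := st_succ _ _
    have := Lam_chunk_le x j
    omega
  · have h2 : st (Lam x) (2*k+1) ≤ st (Lam x) (2*j+1) := st_mono _ (by omega)
    have h3 : st (Lam x) (2*k+1) = st (Lam x) (2*k) + Lam x (2*k) := st_succ _ _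
    omega

lemma CAB_Cst (k : ℕ) : CAB (Lam x) (Cst x) (2*k+2) = Lam x (2*k+2) := by
  rw [CAB]
  have heq : Cst x ∩ Set.Ico (st (Lam x) (2*k+2)) (st (Lam x) (2*k+2) + Lam x (2*k+2))
      = Set.Ico (st (Lam x) (2*k+2)) (st (Lam x) (2*k+2) + Lam x (2*k+2)) := by
    apply Set.inter_eq_self_of_subset_right
    intro n hn
    rw [Cst, Set.mem_iUnion]
    exact ⟨k, hn⟩
  rw [heq, ncard_Ico]

lemma Bst_mem : Bst x ∈ EU (fE (Lam x)) := by
  have hL1 := Lam_one x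
  apply mem_EU_of_bound (Lam x) hL1 (fun b => ((1:ℝ)/2)^(b/2))
  · intro b
    rcases Nat.even_or_odd b with ⟨k, hk⟩ | ⟨k, hk⟩
    · have hb : b = 2*k := by omega
      subst hb
      rw [CAB_Bst_even]
      push_cast
      positivity
    · have hb : b = 2*k+1 := by omega
      subst hb
      rw [CAB_Bst_odd]
      have hdiv : (2*k+1)/2 = k := by omega
      rw [hdiv, Lam, Lam, ex_even', ex_odd]
      push_cast
      rw [pow_add]
      have h1 : ((1:ℝ)/2)^k * ((2:ℝ)^(a x (k+1)) * 2^(k+1)) = 2^(a x (k+1)) * 2 := by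
        rw [div_pow, one_pow, pow_succ]
        have h2 : (2:ℝ)^k ≠ 0 := by positivity
        field_simp
      rw [h1]
      nlinarith [pow_pos (show (0:ℝ) < 2 by norm_num) (a x (k+1))]
  · intro b; positivity
  · intro b
    apply pow_le_one₀ (by norm_num) (by norm_num)
  · have hdiv : Tendsto (fun b : ℕ => b/2) atTop atTop := by
      apply tendsto_atTop_atTop.2
      intro B
      exact ⟨2*B, fun n hn => by omega⟩
    exact (tendsto_pow_atTop_nhds_zero_of_lt_one (by norm_num) (by norm_num)).comp hdiv

lemma Cst_not_mem : Cst x ∉ EU (fE (Lam x)) := by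
  intro h
  have hL1 := Lam_one x
  have h1 := EU_to_block (Lam x) hL1 h
  have h2 : StrictMono (fun k : ℕ => 2*k+2) := by
    intro i j hij
    dsimp only
    omega
  have h3 := h1.comp h2.tendsto_atTop
  have h4 : (fun k : ℕ => ((CAB (Lam x) (Cst x) (2*k+2) : ℝ) / Lam x (2*k+2))) = fun _ => (1:ℝ) := by
    funext k
    rw [CAB_Cst]
    have : (0:ℝ) < Lam x (2*k+2) := by exact_mod_cast Lam_one x (2*k+2)
    field_simp
  have h5 : Tendsto (fun _ : ℕ => (1:ℝ)) atTop (𝓝 0) := by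
    have : (fun k : ℕ => ((CAB (Lam x) (Cst x) ((fun k:ℕ => 2*k+2) k) : ℝ) / Lam x ((fun k:ℕ => 2*k+2) k))) = fun _ => (1:ℝ) := h4
    exact this ▸ h3
  have := tendsto_nhds_unique h5 tendsto_const_nhds
  norm_num at this

lemma cnt_le_Bst (n : ℕ) : cnt (Cst x) n ≤ cnt (Bst x) n := by
  have hL1 := Lam_one x
  rw [cnt, cnt]
  set ψ : ℕ → ℕ := fun m => m - Lam x (blk (Lam x) m - 1) with hψ
  have hblkC : ∀ m ∈ Cst x, ∃ k, st (Lam x) (2*k+2) ≤ m ∧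
      m < st (Lam x) (2*k+2) + Lam x (2*k+2) ∧ blk (Lam x) m = 2*k+2 := by
    intro m hm
    rw [Cst, Set.mem_iUnion] at hm
    obtain ⟨k, hk⟩ := hm
    rw [Set.mem_Ico] at hk
    refine ⟨k, hk.1, hk.2, ?_⟩
    apply blk_eq (Lam x) hL1 hk.1
    rw [st_succ]
    exact hk.2
  have hψval : ∀ m ∈ Cst x, ∃ k, st (Lam x) (2*k+2) ≤ m ∧
      m < st (Lam x) (2*k+2) + Lam x (2*k+2) ∧
      ψ m = st (Lam x) (2*k+1) + (m - st (Lam x) (2*k+2)) ∧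
      ψ m ∈ Set.Ico (st (Lam x) (2*k+1)) (st (Lam x) (2*k+1) + Lam x (2*k+2)) := by
    intro m hm
    obtain ⟨k, h1, h2, h3⟩ := hblkC m hm
    have hst : st (Lam x) (2*k+2) = st (Lam x) (2*k+1) + Lam x (2*k+1) := st_succ _ _
    have hv : ψ m = st (Lam x) (2*k+1) + (m - st (Lam x) (2*k+2)) := by
      rw [hψ]
      simp only
      rw [h3]
      have : 2*k+2-1 = 2*k+1 := by omega
      rw [this]
      omega
    refine ⟨k, h1, h2, hv, ?_⟩
    rw [Set.mem_Ico]
    omega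
  apply Set.ncard_le_ncard_of_injOn ψ
  · rintro m ⟨hmC, hmn⟩
    obtain ⟨k, h1, h2, h3, h4⟩ := hψval m hmC
    constructor
    · rw [Bst, Set.mem_iUnion]
      exact ⟨k, h4⟩
    · rw [Set.mem_Iio] at hmn ⊢
      have hst : st (Lam x) (2*k+2) = st (Lam x) (2*k+1) + Lam x (2*k+1) := st_succ _ _
      have := hL1 (2*k+1)
      omega
  · rintro m1 ⟨hm1C, _⟩ m2 ⟨hm2C, _⟩ heq
    obtain ⟨k1, a1, a2, a3, a4⟩ := hψval m1 hm1C
    obtain ⟨k2, b1, b2, b3, b4⟩ := hψval m2 hm2C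
    have hk : k1 = k2 := by
      by_contra hne
      rw [Set.mem_Ico] at a4 b4
      rcases Nat.lt_or_ge k1 k2 with hlt | hge
      · have c1 : st (Lam x) (2*k1+2) ≤ st (Lam x) (2*k2+1) := st_mono _ (by omega)
        have c2 : st (Lam x) (2*k1+2) = st (Lam x) (2*k1+1) + Lam x (2*k1+1) := st_succ _ _
        have := Lam_chunk_le x k1
        omega
      · have hlt2 : k2 < k1 := by omega
        have c1 : st (Lam x) (2*k2+2) ≤ st (Lam x) (2*k1+1) := st_mono _ (by omega)
        have c2 : st (Lam x) (2*k2+2) = st (Lam x) (2*k2+1) + Lam x (2*k2+1) := st_succ _ _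
        have := Lam_chunk_le x k2
        omega
    subst hk
    rw [a3, b3] at heq
    omega

lemma not_incinv : ¬ IncInv (EU (fE (Lam x))) := by
  intro h
  exact Cst_not_mem x (h (Bst x) (Bst_mem x) (Cst x) (cnt_le_Bst x))

end IncInvFail


section Antichain

/-- block `b` of the `x`-ideal, as a finset -/
noncomputable def blockF (x : Set ℕ) (b : ℕ) : Finset ℕ :=
  Finset.Ico (st (Lam x) b) (st (Lam x) b + Lam x b)

/-- the `J`-th large block of the `y`-ideal -/
noncomputable def Yb (y : Set ℕ) (J : ℕ) : Finset ℕ := blockF y (2*J+1)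

/-- image of the `J`-th large `y`-block under `φ` -/
noncomputable def PJ (y : Set ℕ) (φ : ℕ → ℕ) (J : ℕ) : Finset ℕ := (Yb y J).image φ

noncomputable def hits (x y : Set ℕ) (φ : ℕ → ℕ) (J b : ℕ) : ℕ :=
  (PJ y φ J ∩ blockF x b).card

noncomputable def cap (x : Set ℕ) (b : ℕ) : ℕ := Lam x b / (b+1)

noncomputable def bnd (y : Set ℕ) (φ : ℕ → ℕ) (J : ℕ) : ℕ := (PJ y φ J).sup id + 1

lemma card_blockF (x : Set ℕ) (b : ℕ) : (blockF x b).card = Lam x b := by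
  rw [blockF, Nat.card_Ico]; omega

lemma sum_card_inter (x : Set ℕ) (Q : Finset ℕ) (M : ℕ) :
    ∑ b ∈ Finset.range M, (Q ∩ blockF x b).card
      = (Q.filter (fun p => p < st (Lam x) M)).card := by
  classical
  induction M with
  | zero =>
    simp [st_zero]
  | succ n ih =>
    rw [Finset.sum_range_succ, ih]
    have hst : st (Lam x) (n+1) = st (Lam x) n + Lam x n := st_succ _ _
    have hdisj : Disjoint (Q.filter (fun p => p < st (Lam x) n)) (Q ∩ blockF x n) := by
      rw [Finset.disjoint_left]
      intro p hp1 hp2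
      rw [Finset.mem_filter] at hp1
      rw [Finset.mem_inter] at hp2
      have h2 := hp2.2
      rw [blockF, Finset.mem_Ico] at h2
      omega
    have hunion : Q.filter (fun p => p < st (Lam x) (n+1))
        = Q.filter (fun p => p < st (Lam x) n) ∪ (Q ∩ blockF x n) := by
      ext p
      simp only [Finset.mem_filter, Finset.mem_union, Finset.mem_inter, blockF,
        Finset.mem_Ico]
      constructor
      · rintro ⟨hQ, hlt⟩
        by_cases h : p < st (Lam x) n
        · exact Or.inl ⟨hQ, h⟩
        · exact Or.inr ⟨hQ, by omega, by omega⟩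
      · rintro (⟨hQ, h⟩ | ⟨hQ, h⟩)
        · exact ⟨hQ, by omega⟩
        · exact ⟨hQ, by omega⟩
    rw [hunion, Finset.card_union_of_disjoint hdisj]

lemma sum_hits_eq (x y : Set ℕ) (φ : ℕ → ℕ) (hφ : Function.Injective φ) (J M : ℕ)
    (hM : bnd y φ J ≤ M) :
    ∑ b ∈ Finset.range M, hits x y φ J b = Lam y (2*J+1) := by
  classical
  have h1 : ∀ p ∈ PJ y φ J, p < st (Lam x) M := by
    intro p hp
    have h2 : p ≤ (PJ y φ J).sup id := Finset.le_sup (f := id) hp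
    have h3 := le_st (Lam x) (Lam_one x) M
    rw [bnd] at hM
    omega
  have h4 := sum_card_inter x (PJ y φ J) M
  have h5 : (PJ y φ J).filter (fun p => p < st (Lam x) M) = PJ y φ J :=
    Finset.filter_true_of_mem h1
  rw [h5] at h4
  have h6 : (PJ y φ J).card = Lam y (2*J+1) := by
    rw [PJ, Finset.card_image_of_injective _ hφ, Yb, card_blockF]
  rw [← h6]
  exact h4

lemma hits_le_Lam (x y : Set ℕ) (φ : ℕ → ℕ) (J b : ℕ) : hits x y φ J b ≤ Lam x b := by
  rw [hits, ← card_blockF x b]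
  exact Finset.card_le_card Finset.inter_subset_right

lemma hits_le_m (x y : Set ℕ) (φ : ℕ → ℕ) (hφ : Function.Injective φ) (J b : ℕ) :
    hits x y φ J b ≤ Lam y (2*J+1) := by
  rw [hits]
  calc (PJ y φ J ∩ blockF x b).card ≤ (PJ y φ J).card :=
        Finset.card_le_card Finset.inter_subset_left
    _ = Lam y (2*J+1) := by
        rw [PJ, Finset.card_image_of_injective _ hφ, Yb, card_blockF]

lemma nat_geom (n : ℕ) : ∑ i ∈ Finset.range n, 2^i = 2^n - 1 := by
  induction n with
  | zero => simp
  | succ k ih =>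
    rw [Finset.sum_range_succ, ih]
    have h1 : 2^(k+1) = 2*2^k := by ring
    have h2 : 1 ≤ 2^k := Nat.one_le_two_pow
    omega

/-- The key capture estimate. -/
lemma claim1 {x y : Set ℕ} {φ : ℕ → ℕ} (hφ : Function.Injective φ) {k₀ N M J : ℕ}
    (ht : ∀ L, k₀ ≤ L → t x L ≠ t y L)
    (hN : 2*k₀ ≤ N) (hJk : k₀ ≤ J + 1)
    (hJc : 4 * (∑ b ∈ Finset.range N, Lam x b) ≤ c (J+1))
    (hM : bnd y φ J ≤ M) (hNM : N ≤ M) :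
    2^(ex y (2*J+1)) ≤ 2 * ∑ b ∈ Finset.Ico N M, min (hits x y φ J b) (cap x b) := by
  classical
  set g := ex y (2*J+1) with hg
  have hmg : Lam y (2*J+1) = 2^g := rfl
  have hcg : c (J+1) ≤ g := by
    rw [hg, ex_odd]
    have := a_lb y (J+1)
    omega
  have hg80 : 80 ≤ g := by
    have h1 : c 1 ≤ c (J+1) := c_mono (by omega)
    have h2 : c 1 = 80 := by norm_num [c, P]
    omega
  have htot := sum_hits_eq x y φ hφ J M (le_trans hM le_rfl)
  have hsplit : ∑ b ∈ Finset.range M, hits x y φ J b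
      = ∑ b ∈ Finset.range N, hits x y φ J b + ∑ b ∈ Finset.Ico N M, hits x y φ J b := by
    rw [Finset.range_eq_Ico, Finset.range_eq_Ico]
    exact (Finset.sum_Ico_consecutive (fun b => hits x y φ J b) (Nat.zero_le N) hNM).symm
  set U := ∑ b ∈ Finset.range N, Lam x b with hU
  have hUb : ∑ b ∈ Finset.range N, hits x y φ J b ≤ U :=
    Finset.sum_le_sum (fun b _ => hits_le_Lam x y φ J b)
  set H := (Finset.Ico N M).filter (fun b => cap x b < hits x y φ J b) with hH
  have hterm : ∑ b ∈ Finset.Ico N M, hits x y φ J b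
      ≤ (∑ b ∈ Finset.Ico N M, min (hits x y φ J b) (cap x b)) + ∑ b ∈ H, Lam x b := by
    have e0 : ∑ b ∈ H, Lam x b
        = ∑ b ∈ Finset.Ico N M, (if cap x b < hits x y φ J b then Lam x b else 0) := by
      rw [hH, Finset.sum_filter]
    rw [e0, ← Finset.sum_add_distrib]
    apply Finset.sum_le_sum
    intro b _
    have h1 := hits_le_Lam x y φ J b
    by_cases hc : cap x b < hits x y φ J b
    · rw [if_pos hc]; omega
    · rw [if_neg hc]; omega
  have hHle : ∀ b ∈ H, ex x b + 7 ≤ g := by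
    intro b hb
    rw [hH, Finset.mem_filter, Finset.mem_Ico] at hb
    obtain ⟨⟨hbN, hbM⟩, hheavy⟩ := hb
    have hhm : hits x y φ J b ≤ 2^g := by
      rw [← hmg]; exact hits_le_m x y φ hφ J b
    have hlt : Lam x b < hits x y φ J b * (b+1) :=
      (Nat.div_lt_iff_lt_mul (by omega)).1 hheavy
    have hb2 : b + 1 ≤ 2^b := Nat.lt_two_pow_self
    have hlt2 : Lam x b < 2^(g+b) := by
      calc Lam x b < hits x y φ J b * (b+1) := hlt
      _ ≤ 2^g * 2^b := Nat.mul_le_mul hhm hb2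
      _ = 2^(g+b) := (pow_add 2 g b).symm
    have hexlt : ex x b < g + b := by
      have hlam : Lam x b = 2^(ex x b) := rfl
      rw [hlam] at hlt2
      exact (Nat.pow_lt_pow_iff_right (a := 2) (by norm_num)).1 hlt2
    rcases sep ht (show 2*k₀ ≤ b by omega) hJk with hsep | hsep
    · rw [← hg] at hsep; exact hsep
    · rw [← hg] at hsep; omega
  have hsumH : ∑ b ∈ H, Lam x b ≤ 2^(g-6) := by
    have e1 : ∑ b ∈ H, Lam x b = ∑ e ∈ H.image (ex x), 2^e := by
      rw [Finset.sum_image (fun b _ b' _ h => ex_inj x h)]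
      rfl
    have e2 : H.image (ex x) ⊆ Finset.range (g-6) := by
      intro e he
      rw [Finset.mem_image] at he
      obtain ⟨b, hb, rfl⟩ := he
      rw [Finset.mem_range]
      have := hHle b hb
      omega
    calc ∑ b ∈ H, Lam x b = ∑ e ∈ H.image (ex x), 2^e := e1
      _ ≤ ∑ e ∈ Finset.range (g-6), 2^e := Finset.sum_le_sum_of_subset e2
      _ = 2^(g-6) - 1 := nat_geom _
      _ ≤ 2^(g-6) := Nat.sub_le _ _
  have hU2 : U ≤ 2^(g-2) := by
    have h1 : 4*U ≤ g := le_trans hJc hcg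
    have h2 : g < 2^g := Nat.lt_two_pow_self
    have e2 : g-2+2 = g := by omega
    have h3 : 2^(g-2+2) = 4 * 2^(g-2) := by rw [pow_add]; ring
    rw [e2] at h3
    omega
  obtain ⟨g', hg'⟩ : ∃ g', g = g' + 7 := ⟨g - 7, by omega⟩
  have p1 : 2^g = 128 * 2^g' := by rw [hg', pow_add]; ring
  have p2 : 2^(g-6) = 2 * 2^g' := by
    have : g - 6 = g' + 1 := by omega
    rw [this, pow_add]; ring
  have p3 : 2^(g-2) = 32 * 2^g' := by
    have : g - 2 = g' + 5 := by omega
    rw [this, pow_add]; ring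
  omega

end Antichain


section Stages

lemma block_pos_unique {x : Set ℕ} {b1 b2 n : ℕ}
    (h1 : st (Lam x) b1 ≤ n) (h1' : n < st (Lam x) b1 + Lam x b1)
    (h2 : st (Lam x) b2 ≤ n) (h2' : n < st (Lam x) b2 + Lam x b2) : b1 = b2 := by
  rcases lt_trichotomy b1 b2 with h | h | h
  · exfalso
    have e1 : st (Lam x) (b1+1) = st (Lam x) b1 + Lam x b1 := st_succ _ _
    have e2 : st (Lam x) (b1+1) ≤ st (Lam x) b2 := st_mono _ (by omega)
    omega
  · exact h
  · exfalso
    have e1 : st (Lam x) (b2+1) = st (Lam x) b2 + Lam x b2 := st_succ _ _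
    have e2 : st (Lam x) (b2+1) ≤ st (Lam x) b1 := st_mono _ (by omega)
    omega

noncomputable def pickJ (x : Set ℕ) (k₀ N prevJ : ℕ) : ℕ :=
  max (max (prevJ+1) k₀) (4 * (∑ b ∈ Finset.range N, Lam x b))

noncomputable def stage (x y : Set ℕ) (φ : ℕ → ℕ) (k₀ : ℕ) : ℕ → ℕ × ℕ
  | 0 => (2*k₀, pickJ x k₀ (2*k₀) 0)
  | (i+1) =>
      (max (bnd y φ (stage x y φ k₀ i).2) ((stage x y φ k₀ i).1+1),
       pickJ x k₀ (max (bnd y φ (stage x y φ k₀ i).2) ((stage x y φ k₀ i).1+1))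
         (stage x y φ k₀ i).2)

variable (x y : Set ℕ) (φ : ℕ → ℕ) (k₀ : ℕ)

lemma stage_zero : stage x y φ k₀ 0 = (2*k₀, pickJ x k₀ (2*k₀) 0) := rfl

lemma stage_succ (i : ℕ) : stage x y φ k₀ (i+1)
    = (max (bnd y φ (stage x y φ k₀ i).2) ((stage x y φ k₀ i).1+1),
       pickJ x k₀ (max (bnd y φ (stage x y φ k₀ i).2) ((stage x y φ k₀ i).1+1))
         (stage x y φ k₀ i).2) := rfl

lemma stageJ_pick (i : ℕ) : (stage x y φ k₀ i).2
    = pickJ x k₀ (stage x y φ k₀ i).1 (if h : i = 0 then 0 else (stage x y φ k₀ (i-1)).2) := by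
  cases i with
  | zero => rfl
  | succ n =>
    rw [stage_succ]
    simp

lemma pickJ_ge_k (N prevJ : ℕ) : k₀ ≤ pickJ x k₀ N prevJ :=
  le_trans (le_max_right _ _) (le_max_left _ _)

lemma pickJ_ge_prev (N prevJ : ℕ) : prevJ + 1 ≤ pickJ x k₀ N prevJ :=
  le_trans (le_max_left _ _) (le_max_left _ _)

lemma pickJ_ge_sum (N prevJ : ℕ) :
    4 * (∑ b ∈ Finset.range N, Lam x b) ≤ pickJ x k₀ N prevJ :=
  le_max_right _ _

lemma stageN_lt (i : ℕ) : (stage x y φ k₀ i).1 < (stage x y φ k₀ (i+1)).1 := by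
  rw [stage_succ]
  simp only
  omega

lemma stageN_ge (i : ℕ) : 2*k₀ ≤ (stage x y φ k₀ i).1 := by
  induction i with
  | zero => rw [stage_zero]
  | succ n ih =>
    have := stageN_lt x y φ k₀ n
    omega

lemma stageN_mono : StrictMono (fun i => (stage x y φ k₀ i).1) :=
  strictMono_nat_of_lt_succ (stageN_lt x y φ k₀)

lemma stageJ_lt (i : ℕ) : (stage x y φ k₀ i).2 < (stage x y φ k₀ (i+1)).2 := by
  rw [stage_succ]
  simp only
  have := pickJ_ge_prev x k₀
    (max (bnd y φ (stage x y φ k₀ i).2) ((stage x y φ k₀ i).1+1)) (stage x y φ k₀ i).2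
  omega

lemma stage_bnd (i : ℕ) : bnd y φ (stage x y φ k₀ i).2 ≤ (stage x y φ k₀ (i+1)).1 := by
  rw [stage_succ]
  exact le_max_left _ _

lemma stageJ_k (i : ℕ) : k₀ ≤ (stage x y φ k₀ i).2 + 1 := by
  rw [stageJ_pick]
  have := pickJ_ge_k x k₀ (stage x y φ k₀ i).1
    (if h : i = 0 then 0 else (stage x y φ k₀ (i-1)).2)
  omega

lemma stageJ_c (i : ℕ) :
    4 * (∑ b ∈ Finset.range (stage x y φ k₀ i).1, Lam x b) ≤ c ((stage x y φ k₀ i).2 + 1) := by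
  have h1 : 4 * (∑ b ∈ Finset.range (stage x y φ k₀ i).1, Lam x b) ≤ (stage x y φ k₀ i).2 := by
    rw [stageJ_pick]
    exact pickJ_ge_sum x k₀ _ _
  have h2 := le_c ((stage x y φ k₀ i).2 + 1)
  omega

/-- chosen capture set inside block `b` -/
noncomputable def chooseS (J b : ℕ) : Finset ℕ :=
  Classical.choose (Finset.exists_subset_card_eq
    (s := PJ y φ J ∩ blockF x b) (n := min (hits x y φ J b) (cap x b)) (min_le_left _ _))

lemma chooseS_spec (J b : ℕ) : chooseS x y φ J b ⊆ PJ y φ J ∩ blockF x b ∧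
    (chooseS x y φ J b).card = min (hits x y φ J b) (cap x b) := by
  have h := Classical.choose_spec (Finset.exists_subset_card_eq
    (s := PJ y φ J ∩ blockF x b) (n := min (hits x y φ J b) (cap x b)) (min_le_left _ _))
  exact h

noncomputable def Ai (i : ℕ) : Finset ℕ :=
  (Finset.Ico (stage x y φ k₀ i).1 (stage x y φ k₀ (i+1)).1).biUnion
    (fun b => chooseS x y φ (stage x y φ k₀ i).2 b)

noncomputable def Aset : Set ℕ := ⋃ i, ↑(Ai x y φ k₀ i)

lemma Ai_card (hφ : Function.Injective φ) (ht : ∀ L, k₀ ≤ L → t x L ≠ t y L) (i : ℕ) :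
    2^(ex y (2*(stage x y φ k₀ i).2+1)) ≤ 2 * (Ai x y φ k₀ i).card := by
  have hcard : (Ai x y φ k₀ i).card
      = ∑ b ∈ Finset.Ico (stage x y φ k₀ i).1 (stage x y φ k₀ (i+1)).1,
          min (hits x y φ (stage x y φ k₀ i).2 b) (cap x b) := by
    rw [Ai, Finset.card_biUnion]
    · apply Finset.sum_congr rfl
      intro b _
      exact (chooseS_spec x y φ (stage x y φ k₀ i).2 b).2
    · intro b1 _ b2 _ hne
      apply Finset.disjoint_left.2
      intro n hn1 hn2
      have h1 := (chooseS_spec x y φ (stage x y φ k₀ i).2 b1).1 hn1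
      have h2 := (chooseS_spec x y φ (stage x y φ k₀ i).2 b2).1 hn2
      rw [Finset.mem_inter] at h1 h2
      have e1 := h1.2; have e2 := h2.2
      rw [blockF, Finset.mem_Ico] at e1 e2
      exact hne (block_pos_unique e1.1 e1.2 e2.1 e2.2)
  rw [hcard]
  exact claim1 hφ ht (stageN_ge x y φ k₀ i) (stageJ_k x y φ k₀ i) (stageJ_c x y φ k₀ i)
    (stage_bnd x y φ k₀ i) (le_of_lt (stageN_lt x y φ k₀ i))

lemma Ai_block_empty (i b : ℕ)
    (hb : ¬((stage x y φ k₀ i).1 ≤ b ∧ b < (stage x y φ k₀ (i+1)).1)) :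
    ∀ n ∈ Ai x y φ k₀ i, n ∉ Set.Ico (st (Lam x) b) (st (Lam x) b + Lam x b) := by
  intro n hn hnb
  rw [Ai, Finset.mem_biUnion] at hn
  obtain ⟨b', hb', hnS⟩ := hn
  have h1 := (chooseS_spec x y φ (stage x y φ k₀ i).2 b').1 hnS
  rw [Finset.mem_inter] at h1
  have e1 := h1.2
  rw [blockF, Finset.mem_Ico] at e1
  rw [Set.mem_Ico] at hnb
  have : b' = b := block_pos_unique e1.1 e1.2 hnb.1 hnb.2
  subst this
  rw [Finset.mem_Ico] at hb'
  exact hb ⟨hb'.1, hb'.2⟩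

lemma CAB_Aset_le (b : ℕ) : CAB (Lam x) (Aset x y φ k₀) b ≤ cap x b := by
  by_cases hex : ∃ i, (stage x y φ k₀ i).1 ≤ b ∧ b < (stage x y φ k₀ (i+1)).1
  · obtain ⟨i₀, hi₀⟩ := hex
    have hsub : Aset x y φ k₀ ∩ Set.Ico (st (Lam x) b) (st (Lam x) b + Lam x b)
        ⊆ ↑(chooseS x y φ (stage x y φ k₀ i₀).2 b) := by
      rintro n ⟨hnA, hnb⟩
      rw [Aset, Set.mem_iUnion] at hnA
      obtain ⟨i, hni⟩ := hnA
      rw [Finset.mem_coe, Ai, Finset.mem_biUnion] at hni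
      obtain ⟨b', hb', hnS⟩ := hni
      have h1 := (chooseS_spec x y φ (stage x y φ k₀ i).2 b').1 hnS
      rw [Finset.mem_inter] at h1
      have e1 := h1.2
      rw [blockF, Finset.mem_Ico] at e1
      rw [Set.mem_Ico] at hnb
      have hbb : b' = b := block_pos_unique e1.1 e1.2 hnb.1 hnb.2
      subst hbb
      have hii : i = i₀ := by
        rw [Finset.mem_Ico] at hb'
        by_contra hne
        rcases Nat.lt_or_ge i i₀ with hlt | hge
        · have : (stage x y φ k₀ (i+1)).1 ≤ (stage x y φ k₀ i₀).1 :=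
            (stageN_mono x y φ k₀).monotone (by omega)
          omega
        · have hlt2 : i₀ < i := by omega
          have : (stage x y φ k₀ (i₀+1)).1 ≤ (stage x y φ k₀ i).1 :=
            (stageN_mono x y φ k₀).monotone (by omega)
          omega
      subst hii
      exact hnS
    calc CAB (Lam x) (Aset x y φ k₀) b
        ≤ (↑(chooseS x y φ (stage x y φ k₀ i₀).2 b) : Set ℕ).ncard := by
          rw [CAB]
          exact Set.ncard_le_ncard hsub (Finset.finite_toSet _)
      _ = (chooseS x y φ (stage x y φ k₀ i₀).2 b).card := Set.ncard_coe_finset _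
      _ = min (hits x y φ (stage x y φ k₀ i₀).2 b) (cap x b) :=
          (chooseS_spec x y φ _ b).2
      _ ≤ cap x b := min_le_right _ _
  · have hempty : Aset x y φ k₀ ∩ Set.Ico (st (Lam x) b) (st (Lam x) b + Lam x b) = ∅ := by
      ext n
      simp only [Set.mem_inter_iff, Set.mem_empty_iff_false, iff_false]
      rintro ⟨hnA, hnb⟩
      rw [Aset, Set.mem_iUnion] at hnA
      obtain ⟨i, hni⟩ := hnA
      rw [Finset.mem_coe] at hni
      refine Ai_block_empty x y φ k₀ i b ?_ n hni hnb
      intro hcon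
      exact hex ⟨i, hcon⟩
    rw [CAB, hempty]
    simp

lemma Aset_mem : Aset x y φ k₀ ∈ EU (fE (Lam x)) := by
  apply mem_EU_of_bound (Lam x) (Lam_one x) (fun b => 1/((b:ℝ)+1))
  · intro b
    have h1 := CAB_Aset_le x y φ k₀ b
    have h2 : ((cap x b : ℕ) : ℝ) ≤ (Lam x b : ℝ) / ((b:ℝ)+1) := by
      rw [cap]
      have := Nat.cast_div_le (α := ℝ) (m := Lam x b) (n := b+1)
      push_cast at this ⊢
      exact this
    calc ((CAB (Lam x) (Aset x y φ k₀) b : ℕ) : ℝ) ≤ ((cap x b : ℕ) : ℝ) := by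
          exact_mod_cast h1
      _ ≤ (Lam x b : ℝ) / ((b:ℝ)+1) := h2
      _ = 1/((b:ℝ)+1) * (Lam x b : ℝ) := by ring
  · intro b; positivity
  · intro b
    rw [div_le_one (by positivity)]
    linarith [(by exact_mod_cast Nat.zero_le b : (0:ℝ) ≤ (b:ℝ))]
  · exact tendsto_one_div_add_atTop_nhds_zero_nat

lemma pullback_big (hφ : Function.Bijective φ) (ht : ∀ L, k₀ ≤ L → t x L ≠ t y L) (i : ℕ) :
    2^(ex y (2*(stage x y φ k₀ i).2+1))
      ≤ 2 * CAB (Lam y) (φ ⁻¹' (Aset x y φ k₀)) (2*(stage x y φ k₀ i).2+1) := by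
  classical
  set J := (stage x y φ k₀ i).2 with hJ
  set T := (Yb y J).filter (fun p => φ p ∈ Ai x y φ k₀ i) with hT
  have hcard : (Ai x y φ k₀ i).card ≤ T.card := by
    apply Finset.card_le_card_of_injOn (Function.invFun φ)
    · intro a ha
      have haP : a ∈ PJ y φ J := by
        have h1 : Ai x y φ k₀ i ⊆ PJ y φ J := by
          intro n hn
          rw [Ai, Finset.mem_biUnion] at hn
          obtain ⟨b', _, hnS⟩ := hn
          exact (Finset.mem_inter.1 ((chooseS_spec x y φ J b').1 hnS)).1
        exact h1 ha
      rw [PJ, Finset.mem_image] at haP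
      obtain ⟨p, hp, rfl⟩ := haP
      rw [Function.leftInverse_invFun hφ.1]
      rw [hT, Finset.mem_coe, Finset.mem_filter]
      exact ⟨hp, ha⟩
    · intro a1 ha1 a2 ha2 heq
      have h1 : Ai x y φ k₀ i ⊆ PJ y φ J := by
        intro n hn
        rw [Ai, Finset.mem_biUnion] at hn
        obtain ⟨b', _, hnS⟩ := hn
        exact (Finset.mem_inter.1 ((chooseS_spec x y φ J b').1 hnS)).1
      obtain ⟨p1, _, rfl⟩ := Finset.mem_image.1 (h1 ha1)
      obtain ⟨p2, _, rfl⟩ := Finset.mem_image.1 (h1 ha2)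
      rw [Function.leftInverse_invFun hφ.1, Function.leftInverse_invFun hφ.1] at heq
      rw [heq]
  have hsub : (↑T : Set ℕ) ⊆ (φ ⁻¹' (Aset x y φ k₀))
      ∩ Set.Ico (st (Lam y) (2*J+1)) (st (Lam y) (2*J+1) + Lam y (2*J+1)) := by
    intro p hp
    rw [Finset.mem_coe, hT, Finset.mem_filter] at hp
    constructor
    · rw [Set.mem_preimage, Aset, Set.mem_iUnion]
      exact ⟨i, hp.2⟩
    · have := hp.1
      rw [Yb, blockF, Finset.mem_Ico] at this
      rw [Set.mem_Ico]
      exact this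
  have hT_le : T.card ≤ CAB (Lam y) (φ ⁻¹' (Aset x y φ k₀)) (2*J+1) := by
    rw [CAB, ← Set.ncard_coe_finset]
    exact Set.ncard_le_ncard hsub
      (Set.Finite.subset (Set.finite_Ico _ _) Set.inter_subset_right)
  have h0 := Ai_card x y φ k₀ hφ.1 ht i
  rw [← hJ] at h0
  omega

lemma pullback_not_mem (hφ : Function.Bijective φ) (ht : ∀ L, k₀ ≤ L → t x L ≠ t y L) :
    φ ⁻¹' (Aset x y φ k₀) ∉ EU (fE (Lam y)) := by
  intro hmem
  have h1 := EU_to_block (Lam y) (Lam_one y) hmem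
  have h2 : StrictMono (fun i => 2*(stage x y φ k₀ i).2+1) := by
    intro i j hij
    have : (stage x y φ k₀ i).2 < (stage x y φ k₀ j).2 := by
      have hm : StrictMono (fun i => (stage x y φ k₀ i).2) :=
        strictMono_nat_of_lt_succ (stageJ_lt x y φ k₀)
      exact hm hij
    dsimp only
    omega
  have h3 := h1.comp h2.tendsto_atTop
  have h4 : ∀ i, (1:ℝ)/2 ≤ ((CAB (Lam y) (φ ⁻¹' (Aset x y φ k₀))
      ((fun i => 2*(stage x y φ k₀ i).2+1) i) : ℝ)
        / Lam y ((fun i => 2*(stage x y φ k₀ i).2+1) i)) := by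
    intro i
    dsimp only
    have hp := pullback_big x y φ k₀ hφ ht i
    have hLeq : Lam y (2*(stage x y φ k₀ i).2+1) = 2^(ex y (2*(stage x y φ k₀ i).2+1)) := rfl
    have hLpos : (0:ℝ) < (Lam y (2*(stage x y φ k₀ i).2+1) : ℝ) := by
      exact_mod_cast Lam_one y (2*(stage x y φ k₀ i).2+1)
    rw [div_le_div_iff₀ (by norm_num) hLpos]
    have hcast : (Lam y (2*(stage x y φ k₀ i).2+1) : ℝ)
        ≤ 2 * (CAB (Lam y) (φ ⁻¹' (Aset x y φ k₀)) (2*(stage x y φ k₀ i).2+1) : ℝ) := by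
      rw [hLeq]
      exact_mod_cast hp
    linarith
  have h5 : (1:ℝ)/2 ≤ 0 := ge_of_tendsto h3 (Filter.Eventually.of_forall h4)
  linarith

end Stages


lemma exists_bad (x y : Set ℕ) (hxy : x ≠ y) (φ : ℕ → ℕ) (hφ : Function.Bijective φ) :
    ∃ A ∈ EU (fE (Lam x)), φ ⁻¹' A ∉ EU (fE (Lam y)) := by
  have hex : ∃ n₀, ¬(n₀ ∈ x ↔ n₀ ∈ y) := by
    by_contra h
    push_neg at h
    apply hxy
    ext n
    have := h n
    tauto
  obtain ⟨n₀, hn₀⟩ := hex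
  have ht : ∀ L, n₀ + 1 ≤ L → t x L ≠ t y L := by
    intro L hL heq
    exact hn₀ (t_inj heq n₀ (by omega))
  exact ⟨Aset x y φ (n₀+1), Aset_mem x y φ (n₀+1), pullback_not_mem x y φ (n₀+1) hφ ht⟩

lemma EUmap_inj : Function.Injective (fun x : Set ℕ => EU (fE (Lam x))) := by
  intro x y h
  by_contra hne
  obtain ⟨A, hA, hA2⟩ := exists_bad x y hne id Function.bijective_id
  rw [Set.preimage_id] at hA2
  simp only at h
  rw [h] at hA
  exact hA2 hA

end S16

theorem stmt_16 :
    ∃ F : Set (Set (Set ℕ)), Cardinal.mk F = Cardinal.continuum ∧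
      (∀ I ∈ F, IsEUIdeal I ∧ ¬ IncInv I) ∧
      (∀ I ∈ F, ∀ J ∈ F, I ≠ J → ¬ SqLe I J) := by
  classical
  refine ⟨Set.range (fun x : Set ℕ => EU (S16.fE (S16.Lam x))), ?_, ?_, ?_⟩
  · rw [Cardinal.mk_range_eq _ S16.EUmap_inj, Cardinal.mk_set, Cardinal.mk_nat,
      Cardinal.two_power_aleph0]
  · rintro I ⟨x, rfl⟩
    exact ⟨⟨S16.fE (S16.Lam x), S16.eucond_x x, rfl⟩, S16.not_incinv x⟩
  · rintro I ⟨x, rfl⟩ J ⟨y, rfl⟩ hne hSq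
    obtain ⟨φ, hφ, hmap⟩ := hSq
    have hxy : x ≠ y := by
      intro h
      apply hne
      rw [h]
    obtain ⟨A, hA, hA2⟩ := S16.exists_bad x y hxy φ hφ
    exact hA2 (hmap A hA)
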